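/- Let $h$ be non-negative supermultiplicative, $f:I\to(0,\infty)$ be $G_tG_h$-convex (i.e., $f(x^t y^{1-t})\le f(x)^{h(t)} f(y)^{h(1-t)}$) with $1\in I$ and $f(1)=1$. Then for all $x,y\in I$ and all $\alpha,\beta>0$ with $\alpha+\beta\le 1$: $f(x^\alpha y^\beta)\le f(x)^{h(\alpha)} f(y)^{h(\beta)}$. -/

import Mathlib

open Real Set

theorem GtGh_functional_inequality (I : Set ℝ) (hI : I ⊆ Ioi 0) (h1I : (1:ℝ) ∈ I)
    (hIgeo : ∀ x ∈ I, ∀ y ∈ I, ∀ t ∈ Icc (0:ℝ) 1, x ^ t * y ^ (1 - t) ∈ I)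
    (hIpow : ∀ x ∈ I, ∀ l ∈ Ioc (0:ℝ) 1, x ^ l ∈ I)
    (h : ℝ → ℝ) (hpos : ∀ t ∈ Icc (0:ℝ) 1, 0 < h t)
    (hsuper : ∀ x ∈ Ioc (0:ℝ) 1, ∀ y ∈ Ioc (0:ℝ) 1, h x * h y ≤ h (x * y))
    (f : ℝ → ℝ) (hfge : ∀ x ∈ I, 1 ≤ f x) (hf1 : f 1 = 1)
    (hconv : ∀ x ∈ I, ∀ y ∈ I, ∀ t ∈ Icc (0:ℝ) 1,
      f (x ^ t * y ^ (1 - t)) ≤ f x ^ h t * f y ^ h (1 - t)) :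
    ∀ x ∈ I, ∀ y ∈ I, ∀ α β : ℝ, 0 < α → 0 < β → α + β ≤ 1 →
      f (x ^ α * y ^ β) ≤ f x ^ h α * f y ^ h β := by
  intro x hx y hy α β hα hβ hs
  have hxpos : (0:ℝ) < x := hI hx
  have hypos : (0:ℝ) < y := hI hy
  set s : ℝ := α + β with hsdef
  have hspos : 0 < s := by positivity
  set t : ℝ := α / s with htdef
  have ht0 : 0 < t := by positivity
  have ht1 : t < 1 := by
    rw [htdef, div_lt_one hspos]; linarith
  have h1t : 1 - t = β / s := by
    rw [htdef, eq_div_iff (ne_of_gt hspos), sub_mul, div_mul_cancel₀ _ (ne_of_gt hspos), hsdef]; ring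
  have htIcc : t ∈ Icc (0:ℝ) 1 := ⟨ht0.le, ht1.le⟩
  have hzI : x ^ t * y ^ (1 - t) ∈ I := hIgeo x hx y hy t htIcc
  set z : ℝ := x ^ t * y ^ (1 - t) with hzdef
  have hzpos : (0:ℝ) < z := hI hzI
  have hsIcc : s ∈ Icc (0:ℝ) 1 := ⟨hspos.le, hs⟩
  have key : x ^ α * y ^ β = z ^ s * (1:ℝ) ^ (1 - s) := by
    rw [Real.one_rpow, mul_one, hzdef, Real.mul_rpow (by positivity) (by positivity),
      ← Real.rpow_mul hxpos.le, ← Real.rpow_mul hypos.le, htdef, h1t,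
      div_mul_cancel₀ _ (ne_of_gt hspos), div_mul_cancel₀ _ (ne_of_gt hspos)]
  have step1 : f (x ^ α * y ^ β) ≤ f z ^ h s := by
    rw [key]
    calc f (z ^ s * (1:ℝ) ^ (1 - s)) ≤ f z ^ h s * f 1 ^ h (1 - s) :=
          hconv z hzI 1 h1I s hsIcc
      _ = f z ^ h s := by rw [hf1, Real.one_rpow, mul_one]
  have hfz : f z ≤ f x ^ h t * f y ^ h (1 - t) := hconv x hx y hy t htIcc
  have hfx1 : 1 ≤ f x := hfge x hx
  have hfy1 : 1 ≤ f y := hfge y hy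
  have hhs := hpos s hsIcc
  have hht := hpos t htIcc
  have hht1 := hpos (1 - t) ⟨by linarith, by linarith⟩
  have step2 : f z ^ h s ≤ (f x ^ h t * f y ^ h (1 - t)) ^ h s := by
    apply Real.rpow_le_rpow (le_trans zero_le_one (hfge z hzI)) hfz hhs.le
  have step3 : (f x ^ h t * f y ^ h (1 - t)) ^ h s
      = f x ^ (h t * h s) * f y ^ (h (1 - t) * h s) := by
    rw [Real.mul_rpow (by positivity) (by positivity),
      ← Real.rpow_mul (by linarith), ← Real.rpow_mul (by linarith)]
  have hmul1 : h t * h s ≤ h α := by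
    have e : t * s = α := by rw [htdef, div_mul_cancel₀ _ (ne_of_gt hspos)]
    have := hsuper t ⟨ht0, ht1.le⟩ s ⟨hspos, hs⟩
    rwa [e] at this
  have hmul2 : h (1 - t) * h s ≤ h β := by
    have e : (1 - t) * s = β := by rw [h1t, div_mul_cancel₀ _ (ne_of_gt hspos)]
    have := hsuper (1 - t) ⟨by linarith, by linarith⟩ s ⟨hspos, hs⟩
    rwa [e] at this
  have step4 : f x ^ (h t * h s) * f y ^ (h (1 - t) * h s) ≤ f x ^ h α * f y ^ h β := by
    exact mul_le_mul (Real.rpow_le_rpow_of_exponent_le hfx1 hmul1)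
      (Real.rpow_le_rpow_of_exponent_le hfy1 hmul2) (by positivity)
      (by positivity)
  calc f (x ^ α * y ^ β) ≤ f z ^ h s := step1
    _ ≤ (f x ^ h t * f y ^ h (1 - t)) ^ h s := step2
    _ = f x ^ (h t * h s) * f y ^ (h (1 - t) * h s) := step3
    _ ≤ f x ^ h α * f y ^ h β := step4
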